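/- For any element g ∈ GL_2(F_q) and any λ ∈ F_q^×, the proportion of elements of the coset SL_2(F_q)·g having eigenvalue λ is at least 1/q. -/

import Mathlib

open Finset Matrix

/-- An injection `SL₂(F) → F³`, giving `|SL₂(F)| ≤ q³`. -/
lemma sl2_card_le (F : Type*) [Field F] [Fintype F] [DecidableEq F] :
    Fintype.card (Matrix.SpecialLinearGroup (Fin 2) F) ≤ Fintype.card F ^ 3 := by
  have h : Function.Injective (fun s : Matrix.SpecialLinearGroup (Fin 2) F =>
      ((s : Matrix (Fin 2) (Fin 2) F) 0 0, (s : Matrix (Fin 2) (Fin 2) F) 0 1,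
        if (s : Matrix (Fin 2) (Fin 2) F) 0 0 = 0 then (s : Matrix (Fin 2) (Fin 2) F) 1 1
        else (s : Matrix (Fin 2) (Fin 2) F) 1 0)) := by
    intro s s' h
    simp only [Prod.mk.injEq] at h
    obtain ⟨h1, h2, h3⟩ := h
    have hs : (s : Matrix (Fin 2) (Fin 2) F) 0 0 * (s : Matrix (Fin 2) (Fin 2) F) 1 1
        - (s : Matrix (Fin 2) (Fin 2) F) 0 1 * (s : Matrix (Fin 2) (Fin 2) F) 1 0 = 1 := by
      rw [← Matrix.det_fin_two]; exact s.2
    have hs' : (s' : Matrix (Fin 2) (Fin 2) F) 0 0 * (s' : Matrix (Fin 2) (Fin 2) F) 1 1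
        - (s' : Matrix (Fin 2) (Fin 2) F) 0 1 * (s' : Matrix (Fin 2) (Fin 2) F) 1 0 = 1 := by
      rw [← Matrix.det_fin_two]; exact s'.2
    apply Subtype.ext
    rw [Matrix.eta_fin_two (s : Matrix (Fin 2) (Fin 2) F),
      Matrix.eta_fin_two (s' : Matrix (Fin 2) (Fin 2) F)]
    by_cases ha : (s : Matrix (Fin 2) (Fin 2) F) 0 0 = 0
    · have ha' : (s' : Matrix (Fin 2) (Fin 2) F) 0 0 = 0 := h1 ▸ ha
      rw [if_pos ha] at h3
      rw [if_pos ha'] at h3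
      have hb : (s : Matrix (Fin 2) (Fin 2) F) 0 1 ≠ 0 := by
        intro hb; rw [ha, hb] at hs; simp at hs
      have hc : (s : Matrix (Fin 2) (Fin 2) F) 1 0
          = -((s : Matrix (Fin 2) (Fin 2) F) 0 1)⁻¹ := by
        field_simp
        rw [ha] at hs; linear_combination -hs
      have hc' : (s' : Matrix (Fin 2) (Fin 2) F) 1 0
          = -((s' : Matrix (Fin 2) (Fin 2) F) 0 1)⁻¹ := by
        have hb' : (s' : Matrix (Fin 2) (Fin 2) F) 0 1 ≠ 0 := h2 ▸ hb
        field_simp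
        rw [ha'] at hs'; linear_combination -hs'
      rw [h1, h2, h3, hc, hc', h2]
    · have ha' : (s' : Matrix (Fin 2) (Fin 2) F) 0 0 ≠ 0 := h1 ▸ ha
      rw [if_neg ha] at h3
      rw [if_neg ha'] at h3
      have hd : (s : Matrix (Fin 2) (Fin 2) F) 1 1 = (1 + (s : Matrix (Fin 2) (Fin 2) F) 0 1
          * (s : Matrix (Fin 2) (Fin 2) F) 1 0) * ((s : Matrix (Fin 2) (Fin 2) F) 0 0)⁻¹ := by
        field_simp; linear_combination hs
      have hd' : (s' : Matrix (Fin 2) (Fin 2) F) 1 1 = (1 + (s' : Matrix (Fin 2) (Fin 2) F) 0 1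
          * (s' : Matrix (Fin 2) (Fin 2) F) 1 0) * ((s' : Matrix (Fin 2) (Fin 2) F) 0 0)⁻¹ := by
        field_simp; linear_combination hs'
      rw [h1, h2, h3, hd, hd', h1, h2, h3]
  calc Fintype.card (Matrix.SpecialLinearGroup (Fin 2) F)
      ≤ Fintype.card (F × F × F) := Fintype.card_le_of_injective _ h
    _ = Fintype.card F ^ 3 := by simp [Fintype.card_prod]; ring

/-- for `g ∈ GL_2(F_q)` and `λ ∈ F_q^×`, the proportion of elements of
the coset `SL_2(F_q)·g` having eigenvalue `λ` is at least `1/q`. -/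
theorem stmt_10 (F : Type*) [Field F] [Fintype F] [DecidableEq F]
    (g : GL (Fin 2) F) (lam : F) (hlam : lam ≠ 0) :
    ((univ.filter (fun s : Matrix.SpecialLinearGroup (Fin 2) F =>
        Matrix.det ((s : Matrix (Fin 2) (Fin 2) F) * (g : Matrix (Fin 2) (Fin 2) F)
          - lam • (1 : Matrix (Fin 2) (Fin 2) F)) = 0)).card : ℝ) /
      (Fintype.card (Matrix.SpecialLinearGroup (Fin 2) F)) ≥
      1 / (Fintype.card F : ℝ) := by
  classical
  set d : F := Matrix.det (g : Matrix (Fin 2) (Fin 2) F) with hd_def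
  have hgu : IsUnit (Matrix.det (g : Matrix (Fin 2) (Fin 2) F)) :=
    Matrix.isUnit_iff_isUnit_det _ |>.mp g.isUnit
  have hd : d ≠ 0 := hgu.ne_zero
  set t : F := lam + d * lam⁻¹ with ht_def
  -- the family of matrices with determinant d and eigenvalue lam
  set φ : F → F → Matrix (Fin 2) (Fin 2) F := fun x z =>
    if z = 0 then !![lam, x; 0, d * lam⁻¹]
    else !![x, (x * (t - x) - d) * z⁻¹; z, t - x] with hφ_def
  have hφdet : ∀ x z, Matrix.det (φ x z) = d := by
    intro x z
    by_cases hz : z = 0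
    · simp only [hφ_def, if_pos hz, Matrix.det_fin_two_of]
      field_simp
      ring
    · simp only [hφ_def, if_neg hz, Matrix.det_fin_two_of]
      field_simp
      ring
  have hφeig : ∀ x z, Matrix.det (φ x z - lam • 1) = 0 := by
    intro x z
    by_cases hz : z = 0
    · simp [hφ_def, if_pos hz, Matrix.det_fin_two, Matrix.smul_apply, Matrix.one_apply,
        ht_def]
    · simp only [hφ_def, if_neg hz, ht_def]
      simp [Matrix.det_fin_two, Matrix.smul_apply, Matrix.one_apply]
      field_simp
      ring
  -- turn them into elements of SL₂
  have hginv : (g : Matrix (Fin 2) (Fin 2) F)⁻¹ * (g : Matrix (Fin 2) (Fin 2) F) = 1 :=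
    Matrix.nonsing_inv_mul _ hgu
  set ψ : F × F → Matrix.SpecialLinearGroup (Fin 2) F := fun p =>
    ⟨φ p.1 p.2 * (g : Matrix (Fin 2) (Fin 2) F)⁻¹, by
      rw [Matrix.det_mul, hφdet, Matrix.det_nonsing_inv, ← hd_def, Ring.inverse_eq_inv',
        mul_inv_cancel₀ hd]⟩
      with hψ_def
  have hψg : ∀ p : F × F, ((ψ p : Matrix (Fin 2) (Fin 2) F) * (g : Matrix (Fin 2) (Fin 2) F))
      = φ p.1 p.2 := by
    intro p
    show φ p.1 p.2 * (g : Matrix (Fin 2) (Fin 2) F)⁻¹ * (g : Matrix (Fin 2) (Fin 2) F) = _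
    rw [mul_assoc, hginv, mul_one]
  have hφentry10 : ∀ x z, φ x z 1 0 = z := by
    intro x z
    by_cases hz : z = 0
    · simp [hφ_def, if_pos hz, hz]
    · simp [hφ_def, if_neg hz]
  have hφinj : Function.Injective (fun p : F × F => φ p.1 p.2) := by
    rintro ⟨x, z⟩ ⟨x', z'⟩ h
    simp only at h
    have hz : z = z' := by
      have := congrArg (fun M : Matrix (Fin 2) (Fin 2) F => M 1 0) h
      simpa [hφentry10] using this
    subst hz
    by_cases hzz : z = 0
    · have := congrArg (fun M : Matrix (Fin 2) (Fin 2) F => M 0 1) h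
      simp [hφ_def, hzz] at this
      rw [this]
    · have := congrArg (fun M : Matrix (Fin 2) (Fin 2) F => M 0 0) h
      simp [hφ_def, hzz] at this
      rw [this]
  have hψinj : Function.Injective ψ := by
    intro p p' h
    apply hφinj
    have : (ψ p : Matrix (Fin 2) (Fin 2) F) = (ψ p' : Matrix (Fin 2) (Fin 2) F) := by rw [h]
    simpa only [hψg] using congrArg (fun M => M * (g : Matrix (Fin 2) (Fin 2) F)) this
  -- the filter contains the image of ψ
  set P : Matrix.SpecialLinearGroup (Fin 2) F → Prop := fun s =>
    Matrix.det ((s : Matrix (Fin 2) (Fin 2) F) * (g : Matrix (Fin 2) (Fin 2) F)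
      - lam • (1 : Matrix (Fin 2) (Fin 2) F)) = 0 with hP_def
  have hcard : Fintype.card F ^ 2 ≤ (univ.filter P).card := by
    have hmem : ∀ p ∈ (univ : Finset (F × F)), ψ p ∈ univ.filter P := by
      intro p _
      rw [Finset.mem_filter]
      refine ⟨Finset.mem_univ _, ?_⟩
      simp only [hP_def]
      rw [hψg]
      exact hφeig p.1 p.2
    have := Finset.card_le_card_of_injOn ψ hmem hψinj.injOn
    simpa [Fintype.card_prod, sq] using this
  -- conclude
  have hq : 0 < Fintype.card F := Fintype.card_pos
  have hN : 0 < Fintype.card (Matrix.SpecialLinearGroup (Fin 2) F) := Fintype.card_pos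
  have key : Fintype.card (Matrix.SpecialLinearGroup (Fin 2) F)
      ≤ (univ.filter P).card * Fintype.card F := by
    calc Fintype.card (Matrix.SpecialLinearGroup (Fin 2) F)
        ≤ Fintype.card F ^ 3 := sl2_card_le F
      _ = Fintype.card F ^ 2 * Fintype.card F := by ring
      _ ≤ (univ.filter P).card * Fintype.card F := Nat.mul_le_mul_right _ hcard
  rw [ge_iff_le, div_le_div_iff₀ (by exact_mod_cast hq) (by exact_mod_cast hN), one_mul]
  exact_mod_cast key
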